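/- arXiv:1908.10268 — 4 statements merged into one kernel-verified Lean document; each statement's English description precedes it below -/
import Mathlib

section
/- For the truncation-aware matrix mechanism with output WT(x + (ΔA/ε) A⁺ b), where b has i.i.d. mean-zero variance-2 entries, the expected squared error of a single query row w against the true answer wDx is (w(D−T)x)² + (2(ΔA)²/ε²) · wT(AᵀA)⁻¹Tᵀwᵀ. -/
open MeasureTheory Matrix

private lemma memLp_two_integrable_mul {Ω : Type*} [MeasurableSpace Ω] {μ : Measure Ω}
    {f g : Ω → ℝ} (hf : MemLp f 2 μ) (hg : MemLp g 2 μ) :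
    Integrable (fun ω => f ω * g ω) μ := by
  have h : Integrable (fun ω => f ω ^ 2 + g ω ^ 2) μ :=
    hf.integrable_sq.add hg.integrable_sq
  refine h.mono' (hf.aestronglyMeasurable.mul hg.aestronglyMeasurable) ?_
  filter_upwards with ω
  rw [Real.norm_eq_abs, abs_mul]
  nlinarith [sq_nonneg (|f ω| - |g ω|), sq_abs (f ω), sq_abs (g ω),
    abs_nonneg (f ω), abs_nonneg (g ω)]

private lemma second_moment_lemma {Ω : Type*} [MeasurableSpace Ω] (μ : Measure Ω)
    [IsProbabilityMeasure μ] {m : ℕ} (b : Fin m → Ω → ℝ)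
    (hmeas : ∀ j, Measurable (b j))
    (hindep : ProbabilityTheory.iIndepFun b μ)
    (hL2 : ∀ j, MemLp (b j) 2 μ)
    (hmean : ∀ j, ∫ ω, b j ω ∂μ = 0)
    (hvar : ∀ j, ∫ ω, (b j ω) ^ 2 ∂μ = 2)
    (v : Fin m → ℝ) (c : ℝ) :
    ∫ ω, (c - ∑ j, v j * b j ω) ^ 2 ∂μ = c ^ 2 + 2 * ∑ j, v j ^ 2 := by
  have hint : ∀ j k, Integrable (fun ω => b j ω * b k ω) μ := fun j k =>
    memLp_two_integrable_mul (hL2 j) (hL2 k)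
  have hbint : ∀ j, Integrable (b j) μ := fun j => (hL2 j).integrable one_le_two
  set S : Ω → ℝ := fun ω => ∑ j, v j * b j ω with hS
  have hSint : Integrable S μ :=
    integrable_finset_sum _ fun j _ => (hbint j).const_mul (v j)
  have hSmean : ∫ ω, S ω ∂μ = 0 := by
    rw [integral_finset_sum _ fun j _ => (hbint j).const_mul (v j)]
    simp [integral_const_mul, hmean]
  have hexp : ∀ ω, S ω ^ 2 = ∑ j, ∑ k, (v j * v k) * (b j ω * b k ω) := by
    intro ω
    rw [hS, sq, Finset.sum_mul_sum]
    exact Finset.sum_congr rfl fun j _ => Finset.sum_congr rfl fun k _ => by ring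
  have hS2int : Integrable (fun ω => S ω ^ 2) μ := by
    have : (fun ω => S ω ^ 2) = fun ω => ∑ j, ∑ k, (v j * v k) * (b j ω * b k ω) :=
      funext hexp
    rw [this]
    exact integrable_finset_sum _ fun j _ =>
      integrable_finset_sum _ fun k _ => (hint j k).const_mul _
  have hcross : ∀ j k : Fin m, j ≠ k → ∫ ω, b j ω * b k ω ∂μ = 0 := by
    intro j k hjk
    have h := ProbabilityTheory.IndepFun.integral_mul_eq_mul_integral (hindep.indepFun hjk) (hmeas j).aestronglyMeasurable
      (hmeas k).aestronglyMeasurable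
    rw [show (fun ω => b j ω * b k ω) = b j * b k from rfl, h, hmean j, zero_mul]
  have hS2 : ∫ ω, S ω ^ 2 ∂μ = 2 * ∑ j, v j ^ 2 := by
    simp only [hexp]
    rw [integral_finset_sum _ fun j _ =>
      integrable_finset_sum _ fun k _ => (hint j k).const_mul _]
    have : ∀ j : Fin m, ∫ ω, ∑ k, (v j * v k) * (b j ω * b k ω) ∂μ = 2 * v j ^ 2 := by
      intro j
      rw [integral_finset_sum _ fun k _ => (hint j k).const_mul _]
      have : ∀ k : Fin m, ∫ ω, (v j * v k) * (b j ω * b k ω) ∂μ =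
          if k = j then 2 * v j ^ 2 else 0 := by
        intro k
        rw [integral_const_mul]
        by_cases hk : k = j
        · subst hk
          have heq2 : (fun ω => b k ω * b k ω) = fun ω => b k ω ^ 2 :=
            funext fun ω => (sq (b k ω)).symm
          rw [heq2, hvar k]; simp; ring
        · rw [hcross j k (fun h => hk h.symm)]
          simp [hk]
      simp only [this, Finset.sum_ite_eq' Finset.univ j, Finset.mem_univ, if_true]
    simp only [this]
    rw [Finset.mul_sum]
  have heq : ∀ ω, (c - S ω) ^ 2 = c ^ 2 - (2 * c) * S ω + S ω ^ 2 := fun ω => by ring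
  calc ∫ ω, (c - ∑ j, v j * b j ω) ^ 2 ∂μ
      = ∫ ω, (c ^ 2 - (2 * c) * S ω + S ω ^ 2) ∂μ := by
        exact integral_congr_ae (Filter.Eventually.of_forall fun ω => heq ω)
    _ = (∫ _ω, c ^ 2 ∂μ) - (∫ ω, (2 * c) * S ω ∂μ) + ∫ ω, S ω ^ 2 ∂μ := by
        have h1 : Integrable (fun ω => c ^ 2 - (2 * c) * S ω) μ :=
          (integrable_const (c ^ 2)).sub (hSint.const_mul (2 * c))
        rw [integral_add h1 hS2int, integral_sub (integrable_const (c ^ 2))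
          (hSint.const_mul (2 * c))]
    _ = c ^ 2 + 2 * ∑ j, v j ^ 2 := by
        rw [integral_const_mul, hSmean, hS2, integral_const]
        simp

/-- Expected squared error of the truncation-aware matrix mechanism
`WT(x + (ΔA/ε) A⁺ b)` for a single query row `w` against the true answer `wDx`:
`(w(D−T)x)² + (2(ΔA)²/ε²) · wT(AᵀA)⁻¹Tᵀwᵀ`. -/
theorem TaMM_single_query_error
    {Ω : Type*} [MeasurableSpace Ω] (μ : Measure Ω) [IsProbabilityMeasure μ]
    {m n : ℕ} (b : Fin m → Ω → ℝ)
    (hmeas : ∀ j, Measurable (b j))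
    (hindep : ProbabilityTheory.iIndepFun b μ)
    (hL2 : ∀ j, MemLp (b j) 2 μ)
    (hmean : ∀ j, ∫ ω, b j ω ∂μ = 0)
    (hvar : ∀ j, ∫ ω, (b j ω) ^ 2 ∂μ = 2)
    (x : Fin n → ℝ) (D T : Matrix (Fin n) (Fin n) ℝ) (w : Fin n → ℝ)
    (A : Matrix (Fin m) (Fin n) ℝ) (hA : Invertible (Aᵀ * A))
    (ΔA ε : ℝ) (hΔA : 0 < ΔA) (hε : 0 < ε) :
    ∫ ω, ((w ⬝ᵥ (D *ᵥ x)) -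
          (w ⬝ᵥ (T *ᵥ (x + (ΔA / ε) • (((Aᵀ * A)⁻¹ * Aᵀ) *ᵥ fun j => b j ω))))) ^ 2 ∂μ
      = (w ⬝ᵥ ((D - T) *ᵥ x)) ^ 2
        + (2 * ΔA ^ 2 / ε ^ 2) * (w ⬝ᵥ ((T * (Aᵀ * A)⁻¹ * Tᵀ) *ᵥ w)) := by
  set M : Matrix (Fin n) (Fin m) ℝ := (Aᵀ * A)⁻¹ * Aᵀ with hM
  set N : Matrix (Fin n) (Fin m) ℝ := T * M with hN
  set u : Fin m → ℝ := w ᵥ* N with hu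
  set v : Fin m → ℝ := fun j => (ΔA / ε) * u j with hv
  set c : ℝ := w ⬝ᵥ ((D - T) *ᵥ x) with hc
  have key : ∀ ω : Ω,
      (w ⬝ᵥ (D *ᵥ x)) -
        (w ⬝ᵥ (T *ᵥ (x + (ΔA / ε) • (M *ᵥ fun j => b j ω))))
        = c - ∑ j, v j * b j ω := by
    intro ω
    simp only [hv]
    rw [mulVec_add, dotProduct_add, mulVec_smul, dotProduct_smul, smul_eq_mul,
      mulVec_mulVec, ← hN, hc, sub_mulVec, dotProduct_sub]
    have h2 : w ⬝ᵥ (N *ᵥ fun j => b j ω) = ∑ j, u j * b j ω := by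
      rw [dotProduct_mulVec, ← hu]; rfl
    rw [h2, Finset.mul_sum,
      show ∑ j, (ΔA / ε) * (u j * b j ω) = ∑ j, (ΔA / ε) * u j * b j ω from
        Finset.sum_congr rfl fun j _ => by ring]
    ring
  have hNN : N * Nᵀ = T * (Aᵀ * A)⁻¹ * Tᵀ := by
    have hsymm : ((Aᵀ * A)⁻¹)ᵀ = (Aᵀ * A)⁻¹ := by
      rw [transpose_nonsing_inv, transpose_mul, transpose_transpose]
    have hMMt : M * Mᵀ = (Aᵀ * A)⁻¹ := by
      rw [hM, transpose_mul, hsymm]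
      calc (Aᵀ * A)⁻¹ * Aᵀ * (Aᵀᵀ * (Aᵀ * A)⁻¹)
          = (Aᵀ * A)⁻¹ * (Aᵀ * A) * (Aᵀ * A)⁻¹ := by
            rw [transpose_transpose]; simp only [Matrix.mul_assoc]
        _ = (Aᵀ * A)⁻¹ := by rw [Matrix.inv_mul_of_invertible, Matrix.one_mul]
    rw [hN, transpose_mul,
      show T * M * (Mᵀ * Tᵀ) = T * (M * Mᵀ) * Tᵀ by simp only [Matrix.mul_assoc], hMMt]
  have hsum : ∑ j, u j ^ 2 = w ⬝ᵥ ((T * (Aᵀ * A)⁻¹ * Tᵀ) *ᵥ w) := by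
    have h1 : ∑ j, u j ^ 2 = u ⬝ᵥ u := by
      simp [dotProduct, sq]
    have h2 : u ⬝ᵥ u = w ⬝ᵥ (N *ᵥ u) := (dotProduct_mulVec w N u).symm
    have h3 : N *ᵥ u = (N * Nᵀ) *ᵥ w := by
      rw [hu, ← mulVec_transpose, mulVec_mulVec]
    rw [h1, h2, h3, hNN]
  calc ∫ ω, ((w ⬝ᵥ (D *ᵥ x)) -
          (w ⬝ᵥ (T *ᵥ (x + (ΔA / ε) • (M *ᵥ fun j => b j ω))))) ^ 2 ∂μ
      = ∫ ω, (c - ∑ j, v j * b j ω) ^ 2 ∂μ := by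
        refine integral_congr_ae (Filter.Eventually.of_forall fun ω => ?_)
        dsimp only
        rw [key ω]
    _ = c ^ 2 + 2 * ∑ j, v j ^ 2 :=
        second_moment_lemma μ b hmeas hindep hL2 hmean hvar v c
    _ = (w ⬝ᵥ ((D - T) *ᵥ x)) ^ 2
        + (2 * ΔA ^ 2 / ε ^ 2) * (w ⬝ᵥ ((T * (Aᵀ * A)⁻¹ * Tᵀ) *ᵥ w)) := by
        rw [← hsum, hc]
        have : ∑ j, v j ^ 2 = (ΔA / ε) ^ 2 * ∑ j, u j ^ 2 := by
          rw [Finset.mul_sum]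
          exact Finset.sum_congr rfl fun j _ => by rw [hv]; ring
        rw [this]
        field_simp
end

section
/- For the truncation-independent matrix mechanism with output for query row w given by wTx + (Δ(AT)/ε) w A⁺ b, where b has i.i.d. mean-zero variance-2 entries, the expected squared error against the true answer wDx equals (w(D−T)x)² + (2Δ(AT)²/ε²) · w(AᵀA)⁻¹wᵀ. -/
open MeasureTheory Matrix

/-- Expected squared error of the truncation-independent matrix mechanism output
`wTx + (Δ(AT)/ε) w A⁺ b` against the true answer `wDx`:
`(w(D−T)x)² + (2Δ(AT)²/ε²) · w(AᵀA)⁻¹wᵀ`. -/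
theorem TiMM_single_query_error
    {Ω : Type*} [MeasurableSpace Ω] (μ : Measure Ω) [IsProbabilityMeasure μ]
    {m n : ℕ} (b : Fin m → Ω → ℝ)
    (hmeas : ∀ j, Measurable (b j))
    (hindep : ProbabilityTheory.iIndepFun b μ)
    (hL2 : ∀ j, MemLp (b j) 2 μ)
    (hmean : ∀ j, ∫ ω, b j ω ∂μ = 0)
    (hvar : ∀ j, ∫ ω, (b j ω) ^ 2 ∂μ = 2)
    (x : Fin n → ℝ) (D T : Matrix (Fin n) (Fin n) ℝ) (w : Fin n → ℝ)
    (A : Matrix (Fin m) (Fin n) ℝ) (hA : Invertible (Aᵀ * A))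
    (ΔAT ε : ℝ) (hΔAT : 0 < ΔAT) (hε : 0 < ε) :
    ∫ ω, ((w ⬝ᵥ (D *ᵥ x)) -
          ((w ⬝ᵥ (T *ᵥ x)) +
            (ΔAT / ε) * (w ⬝ᵥ (((Aᵀ * A)⁻¹ * Aᵀ) *ᵥ fun j => b j ω)))) ^ 2 ∂μ
      = (w ⬝ᵥ ((D - T) *ᵥ x)) ^ 2
        + (2 * ΔAT ^ 2 / ε ^ 2) * (w ⬝ᵥ ((Aᵀ * A)⁻¹ *ᵥ w)) := by
  haveI := hA
  have hε' : ε ≠ 0 := ne_of_gt hε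
  set M : Matrix (Fin n) (Fin m) ℝ := (Aᵀ * A)⁻¹ * Aᵀ with hM
  set u : Fin m → ℝ := w ᵥ* M with hu
  set c : ℝ := w ⬝ᵥ ((D - T) *ᵥ x) with hc
  set k : ℝ := ΔAT / ε with hk
  have hbint : ∀ j, Integrable (b j) μ := fun j => (hL2 j).integrable one_le_two
  have hmul : ∀ i j, Integrable (fun ω => b i ω * b j ω) μ := by
    intro i j
    have h1 : MemLp (b i • b j) 1 μ :=
      MemLp.smul (hL2 j) (hL2 i)
        (hpqr := ⟨by simpa using (ENNReal.inv_two_add_inv_two)⟩)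
    exact (memLp_one_iff_integrable.mp h1)
  have hSint : Integrable (fun ω => ∑ j, u j * b j ω) μ :=
    integrable_finset_sum _ fun j _ => (hbint j).const_mul (u j)
  have hSmean : ∫ ω, (∑ j, u j * b j ω) ∂μ = 0 := by
    rw [integral_finset_sum _ fun j _ => (hbint j).const_mul (u j)]
    simp [integral_const_mul, hmean]
  have hcross : ∀ i j, i ≠ j → ∫ ω, b i ω * b j ω ∂μ = 0 := by
    intro i j hij
    have h := (hindep.indepFun hij).integral_mul_eq_mul_integral (hbint i).aestronglyMeasurable (hbint j).aestronglyMeasurable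
    simpa [Pi.mul_apply, hmean i, hmean j] using h
  have hSsqint : Integrable (fun ω => (∑ j, u j * b j ω) ^ 2) μ := by
    have : ∀ ω, (∑ j, u j * b j ω) ^ 2
        = ∑ i, ∑ j, (u i * u j) * (b i ω * b j ω) := by
      intro ω
      rw [sq, Finset.sum_mul_sum]
      refine Finset.sum_congr rfl fun i _ => Finset.sum_congr rfl fun j _ => by ring
    simp_rw [this]
    exact integrable_finset_sum _ fun i _ =>
      integrable_finset_sum _ fun j _ => (hmul i j).const_mul _
  have hSsq : ∫ ω, (∑ j, u j * b j ω) ^ 2 ∂μ = 2 * ∑ j, u j ^ 2 := by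
    have hexp : ∀ ω, (∑ j, u j * b j ω) ^ 2
        = ∑ i, ∑ j, (u i * u j) * (b i ω * b j ω) := by
      intro ω
      rw [sq, Finset.sum_mul_sum]
      refine Finset.sum_congr rfl fun i _ => Finset.sum_congr rfl fun j _ => by ring
    simp_rw [hexp]
    rw [integral_finset_sum _ fun i _ =>
      integrable_finset_sum _ fun j _ => (hmul i j).const_mul _]
    have hrow : ∀ i, ∫ ω, (∑ j, (u i * u j) * (b i ω * b j ω)) ∂μ = u i ^ 2 * 2 := by
      intro i
      rw [integral_finset_sum _ fun j _ => (hmul i j).const_mul _]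
      rw [Finset.sum_eq_single i]
      · rw [integral_const_mul]
        have h2 := hvar i
        simp_rw [sq] at h2 ⊢
        rw [h2]
      · intro j _ hji
        rw [integral_const_mul, hcross i j (Ne.symm hji), mul_zero]
      · simp
    rw [Finset.sum_congr rfl fun i _ => hrow i, ← Finset.sum_mul, mul_comm]
  -- rewrite the integrand
  have hrw : ∀ ω, ((w ⬝ᵥ (D *ᵥ x)) -
          ((w ⬝ᵥ (T *ᵥ x)) +
            (ΔAT / ε) * (w ⬝ᵥ (((Aᵀ * A)⁻¹ * Aᵀ) *ᵥ fun j => b j ω)))) ^ 2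
      = c ^ 2 - (2 * c * k) * (∑ j, u j * b j ω)
        + k ^ 2 * (∑ j, u j * b j ω) ^ 2 := by
    intro ω
    have h1 : w ⬝ᵥ (((Aᵀ * A)⁻¹ * Aᵀ) *ᵥ fun j => b j ω) = ∑ j, u j * b j ω := by
      rw [← hM, Matrix.dotProduct_mulVec, ← hu, dotProduct]
    have h2 : (w ⬝ᵥ (D *ᵥ x)) - (w ⬝ᵥ (T *ᵥ x)) = c := by
      rw [hc, Matrix.sub_mulVec, dotProduct_sub]
    rw [h1, hk]
    rw [show (w ⬝ᵥ (D *ᵥ x)) - ((w ⬝ᵥ (T *ᵥ x)) + ΔAT / ε * ∑ j, u j * b j ω)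
        = ((w ⬝ᵥ (D *ᵥ x)) - (w ⬝ᵥ (T *ᵥ x))) - ΔAT / ε * ∑ j, u j * b j ω by ring, h2]
    ring
  refine (integral_congr_ae (Filter.Eventually.of_forall hrw)).trans ?_
  have hint1 : Integrable (fun ω => c ^ 2 - 2 * c * k * ∑ j, u j * b j ω) μ :=
    (integrable_const _).sub (hSint.const_mul _)
  have hint2 : Integrable (fun ω => k ^ 2 * (∑ j, u j * b j ω) ^ 2) μ :=
    hSsqint.const_mul _
  rw [integral_add hint1 hint2,
    integral_sub (integrable_const (c ^ 2)) (hSint.const_mul _),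
    integral_const, integral_const_mul, integral_const_mul, hSmean, hSsq]
  simp only [measure_univ, probReal_univ, ENNReal.toReal_one, smul_eq_mul, one_mul, mul_zero, sub_zero]
  -- matrix algebra : ∑ j, u j ^ 2 = w ⬝ᵥ ((Aᵀ * A)⁻¹ *ᵥ w)
  have hMMt : M * Mᵀ = (Aᵀ * A)⁻¹ := by
    have ht : ((Aᵀ * A)⁻¹)ᵀ = (Aᵀ * A)⁻¹ := by
      rw [Matrix.transpose_nonsing_inv, Matrix.transpose_mul, Matrix.transpose_transpose]
    rw [hM, Matrix.transpose_mul, Matrix.transpose_transpose, ht]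
    rw [Matrix.mul_assoc, ← Matrix.mul_assoc Aᵀ A _, Matrix.mul_inv_of_invertible,
      Matrix.mul_one]
  have husq : ∑ j, u j ^ 2 = w ⬝ᵥ ((Aᵀ * A)⁻¹ *ᵥ w) := by
    have h3 : ∑ j, u j ^ 2 = u ⬝ᵥ u := by
      rw [dotProduct]; exact Finset.sum_congr rfl fun j _ => (sq (u j))
    rw [h3, hu,
      show w ᵥ* M = Mᵀ *ᵥ w from (Matrix.mulVec_transpose M w).symm,
      Matrix.dotProduct_mulVec,
      show Mᵀ *ᵥ w = w ᵥ* M from Matrix.mulVec_transpose M w,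
      Matrix.vecMul_vecMul, hMMt, Matrix.dotProduct_mulVec]
  rw [husq, hk]
  field_simp
end

section
/- The total expected squared error of the truncation-aware matrix mechanism over a workload matrix W with rows w₁,…,w_p is ‖W(D−T)x‖₂² + (2(ΔA)²/ε²) · Tr(WT(AᵀA)⁻¹TᵀWᵀ). -/
open MeasureTheory Matrix

lemma TaMM_key {Ω : Type*} [MeasurableSpace Ω] (μ : Measure Ω) [IsProbabilityMeasure μ]
    {m : ℕ} (b : Fin m → Ω → ℝ)
    (hmeas : ∀ j, Measurable (b j))
    (hindep : ProbabilityTheory.iIndepFun b μ)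
    (hL2 : ∀ j, MemLp (b j) 2 μ)
    (hmean : ∀ j, ∫ ω, b j ω ∂μ = 0)
    (hvar : ∀ j, ∫ ω, (b j ω) ^ 2 ∂μ = 2)
    (c : ℝ) (v : Fin m → ℝ) :
    ∫ ω, (c - ∑ j, v j * b j ω) ^ 2 ∂μ = c ^ 2 + 2 * ∑ j, v j ^ 2 := by
  have hib : ∀ j, Integrable (b j) μ := fun j => (hL2 j).integrable one_le_two
  have hbb : ∀ j k, Integrable (fun ω => b j ω * b k ω) μ := by
    intro j k
    refine ((hL2 j).integrable_sq.add (hL2 k).integrable_sq).mono'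
      ((hmeas j).mul (hmeas k)).aestronglyMeasurable
      (Filter.Eventually.of_forall fun ω => ?_)
    have := sq_nonneg (|b j ω| - |b k ω|)
    simp only [Real.norm_eq_abs, Pi.add_apply, abs_mul]
    nlinarith [sq_abs (b j ω), sq_abs (b k ω), abs_nonneg (b j ω), abs_nonneg (b k ω)]
  have hS : Integrable (fun ω => ∑ j, v j * b j ω) μ :=
    integrable_finset_sum _ fun j _ => (hib j).const_mul _
  have hS2 : Integrable (fun ω => (∑ j, v j * b j ω) ^ 2) μ := by
    have : (fun ω => (∑ j, v j * b j ω) ^ 2)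
        = fun ω => ∑ j, ∑ k, (v j * v k) * (b j ω * b k ω) := by
      funext ω
      rw [sq, Finset.sum_mul_sum]
      exact Finset.sum_congr rfl fun j _ => Finset.sum_congr rfl fun k _ => by ring
    rw [this]
    exact integrable_finset_sum _ fun j _ =>
      integrable_finset_sum _ fun k _ => (hbb j k).const_mul _
  have hES : ∫ ω, (∑ j, v j * b j ω) ∂μ = 0 := by
    rw [integral_finset_sum _ fun j _ => (hib j).const_mul _]
    simp [integral_const_mul, hmean]
  have hEbb : ∀ j k, ∫ ω, b j ω * b k ω ∂μ = if j = k then 2 else 0 := by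
    intro j k
    by_cases h : j = k
    · subst h; simp only [if_pos rfl, ← sq]; exact hvar j
    · rw [if_neg h]
      have := ProbabilityTheory.IndepFun.integral_mul_eq_mul_integral (hindep.indepFun h) (hmeas j).aestronglyMeasurable
          (hmeas k).aestronglyMeasurable
      have h2 : ∫ ω, b j ω * b k ω ∂μ = ∫ ω, (b j * b k) ω ∂μ := rfl
      rw [h2]
      simp only [this, hmean j, hmean k, mul_zero]
  have hES2 : ∫ ω, (∑ j, v j * b j ω) ^ 2 ∂μ = 2 * ∑ j, v j ^ 2 := by
    have h1 : (fun ω => (∑ j, v j * b j ω) ^ 2)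
        = fun ω => ∑ j, ∑ k, (v j * v k) * (b j ω * b k ω) := by
      funext ω
      rw [sq, Finset.sum_mul_sum]
      exact Finset.sum_congr rfl fun j _ => Finset.sum_congr rfl fun k _ => by ring
    rw [h1, integral_finset_sum _ fun j _ =>
      integrable_finset_sum _ fun k _ => (hbb j k).const_mul _]
    have : ∀ j, ∫ ω, ∑ k, (v j * v k) * (b j ω * b k ω) ∂μ
        = v j ^ 2 * 2 := by
      intro j
      rw [integral_finset_sum _ fun k _ => (hbb j k).const_mul _]
      have : ∀ k, ∫ ω, (v j * v k) * (b j ω * b k ω) ∂μ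
          = (v j * v k) * (if j = k then 2 else 0) := fun k => by
        rw [integral_const_mul, hEbb]
      simp only [this]
      rw [Finset.sum_eq_single j]
      · simp [sq]
      · intro k _ hk; simp [Ne.symm hk]
      · intro h; exact absurd (Finset.mem_univ j) h
    simp only [this]
    rw [← Finset.sum_mul, mul_comm]
  have hexp : (fun ω => (c - ∑ j, v j * b j ω) ^ 2)
      = fun ω => (c ^ 2 - (2 * c) * (∑ j, v j * b j ω)) + (∑ j, v j * b j ω) ^ 2 := by
    funext ω; ring
  rw [hexp]
  have hI1 : Integrable (fun ω => c ^ 2 - (2 * c) * (∑ j, v j * b j ω)) μ :=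
    (integrable_const _).sub (hS.const_mul _)
  rw [integral_add hI1 hS2,
    integral_sub (integrable_const _) (hS.const_mul _), integral_const_mul, hES, hES2]
  simp

/-- Total expected squared error of the truncation-aware matrix mechanism
`WT(x + (ΔA/ε) A⁺ b)` over a workload `W` with `p` rows:
`‖W(D−T)x‖₂² + (2(ΔA)²/ε²) · Tr(WT(AᵀA)⁻¹TᵀWᵀ)`. -/
theorem TaMM_total_error
    {Ω : Type*} [MeasurableSpace Ω] (μ : Measure Ω) [IsProbabilityMeasure μ]
    {m n p : ℕ} (b : Fin m → Ω → ℝ)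
    (hmeas : ∀ j, Measurable (b j))
    (hindep : ProbabilityTheory.iIndepFun b μ)
    (hL2 : ∀ j, MemLp (b j) 2 μ)
    (hmean : ∀ j, ∫ ω, b j ω ∂μ = 0)
    (hvar : ∀ j, ∫ ω, (b j ω) ^ 2 ∂μ = 2)
    (x : Fin n → ℝ) (D T : Matrix (Fin n) (Fin n) ℝ)
    (W : Matrix (Fin p) (Fin n) ℝ)
    (A : Matrix (Fin m) (Fin n) ℝ) (hA : Invertible (Aᵀ * A))
    (ΔA ε : ℝ) (hΔA : 0 < ΔA) (hε : 0 < ε) :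
    ∑ i : Fin p,
        ∫ ω, ((W i ⬝ᵥ (D *ᵥ x)) -
              (W i ⬝ᵥ (T *ᵥ (x + (ΔA / ε) • (((Aᵀ * A)⁻¹ * Aᵀ) *ᵥ fun j => b j ω))))) ^ 2 ∂μ
      = (∑ i : Fin p, ((W * (D - T)) *ᵥ x) i ^ 2)
        + (2 * ΔA ^ 2 / ε ^ 2) * (W * T * (Aᵀ * A)⁻¹ * Tᵀ * Wᵀ).trace := by
  set s : ℝ := ΔA / ε with hs
  set P : Matrix (Fin n) (Fin m) ℝ := (Aᵀ * A)⁻¹ * Aᵀ with hP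
  set M : Matrix (Fin p) (Fin m) ℝ := W * T * P with hM
  have key : ∀ (y : Fin m → ℝ) (i : Fin p),
      (W i ⬝ᵥ (D *ᵥ x)) - (W i ⬝ᵥ (T *ᵥ (x + s • (P *ᵥ y))))
        = ((W * (D - T)) *ᵥ x) i - ∑ j, (s • M) i j * y j := by
    intro y i
    have h1 : (∑ j, (s • M) i j * y j) = ((s • M) *ᵥ y) i := rfl
    have h2 : (s • M) *ᵥ y = s • (W *ᵥ (T *ᵥ (P *ᵥ y))) := by
      rw [smul_mulVec, hM, mulVec_mulVec, mulVec_mulVec]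
    have h3 : (W * (D - T)) *ᵥ x = W *ᵥ (D *ᵥ x) - W *ᵥ (T *ᵥ x) := by
      rw [← mulVec_mulVec, sub_mulVec, mulVec_sub]
    rw [h1, h2, h3, mulVec_add, mulVec_smul, dotProduct_add, dotProduct_smul]
    simp only [Pi.sub_apply, Pi.smul_apply, smul_eq_mul]
    have : ∀ v : Fin n → ℝ, (W *ᵥ v) i = W i ⬝ᵥ v := fun v => rfl
    rw [this, this, this]
    ring
  have hint : ∀ i : Fin p,
      ∫ ω, ((W i ⬝ᵥ (D *ᵥ x)) -
          (W i ⬝ᵥ (T *ᵥ (x + s • (P *ᵥ fun j => b j ω))))) ^ 2 ∂μ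
        = ((W * (D - T)) *ᵥ x) i ^ 2 + 2 * ∑ j, ((s • M) i j) ^ 2 := by
    intro i
    have : (fun ω => ((W i ⬝ᵥ (D *ᵥ x)) -
          (W i ⬝ᵥ (T *ᵥ (x + s • (P *ᵥ fun j => b j ω))))) ^ 2)
        = fun ω => (((W * (D - T)) *ᵥ x) i - ∑ j, (s • M) i j * b j ω) ^ 2 := by
      funext ω; rw [key (fun j => b j ω) i]
    rw [this, TaMM_key μ b hmeas hindep hL2 hmean hvar]
  simp only [hint, Finset.sum_add_distrib]
  congr 1
  -- noise part
  have hsymm : ((Aᵀ * A)⁻¹)ᵀ = (Aᵀ * A)⁻¹ := by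
    rw [Matrix.transpose_nonsing_inv, Matrix.transpose_mul, Matrix.transpose_transpose]
  have hPPt : P * Pᵀ = (Aᵀ * A)⁻¹ := by
    rw [hP, Matrix.transpose_mul, Matrix.transpose_transpose, hsymm]
    have h5 : (Aᵀ * A)⁻¹ * Aᵀ * (A * (Aᵀ * A)⁻¹)
        = (Aᵀ * A)⁻¹ * (Aᵀ * A) * (Aᵀ * A)⁻¹ := by
      simp only [Matrix.mul_assoc]
    rw [h5, Matrix.inv_mul_of_invertible, Matrix.one_mul]
  have h4 : W * T * (Aᵀ * A)⁻¹ * Tᵀ * Wᵀ = M * Mᵀ := by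
    rw [hM, Matrix.transpose_mul (W * T) P, Matrix.transpose_mul W T, ← hPPt]
    simp only [Matrix.mul_assoc]
  have htrace : (W * T * (Aᵀ * A)⁻¹ * Tᵀ * Wᵀ).trace = ∑ i, ∑ j, M i j ^ 2 := by
    rw [h4]
    simp [Matrix.trace, Matrix.mul_apply, Matrix.diag, sq]
  rw [htrace]
  have hs2 : (2 * ΔA ^ 2 / ε ^ 2) = 2 * s ^ 2 := by
    rw [hs]; field_simp
  have hrow : ∀ i, (∑ j, ((s • M) i j) ^ 2) = s ^ 2 * ∑ j, M i j ^ 2 := by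
    intro i
    rw [Finset.mul_sum]
    exact Finset.sum_congr rfl fun j _ => by
      simp only [Matrix.smul_apply, smul_eq_mul]; ring
  simp only [hrow]
  rw [hs2, Finset.mul_sum]
  exact Finset.sum_congr rfl fun i _ => by ring
end

section
/- Let x ∈ ℝⁿ be the histogram vector of a multiset D with respect to buckets (l₁,u₁],…,(l_n,u_n] covering the weights, T = diag(min(u₁,θ),…,min(u_n,θ)), and W the prefix workload matrix. Then the vectorized truncated answer (WTx)_i over-approximates the exact truncated prefix sum: Trunc_θ(q_{u_i})(D) ≤ (WTx)_i ≤ Trunc_θ(q_{u_i})(D_max), where D_max is the multiset obtained by rounding every element of D up to the upper endpoint of its bucket. -/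
/-- Truncated prefix sum query: `Trunc_θ(q_i)(D) = Σ_{t∈D, t≤i} min(t, θ)`. -/
def truncPrefixSum (θ i : ℕ) (D : Multiset ℕ) : ℕ :=
  ((D.filter (fun t => t ≤ i)).map (fun t => min t θ)).sum

/-- Lower endpoint of the `j`-th bucket: `l_j = u_{j-1}` with `l_0 = 0`. -/
def lowerEndpoint {n : ℕ} (u : Fin n → ℕ) (j : Fin n) : ℕ :=
  if _ : (j : ℕ) = 0 then 0
  else u ⟨(j : ℕ) - 1, lt_of_le_of_lt (Nat.pred_le _) j.isLt⟩

/-- Histogram vector: number of elements of `D` in bucket `(l_j, u_j]`. -/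
def bucketCount {n : ℕ} (u : Fin n → ℕ) (D : Multiset ℕ) (j : Fin n) : ℕ :=
  (D.filter (fun t => lowerEndpoint u j < t ∧ t ≤ u j)).card

/-- Round a value up to the upper endpoint of its bucket: the least `u_j ≥ t`
(defaulting to the largest endpoint). -/
def roundUp {n : ℕ} (hn : 0 < n) (u : Fin n → ℕ) (t : ℕ) : ℕ :=
  Finset.univ.inf' (Finset.univ_nonempty_iff.mpr ⟨⟨0, hn⟩⟩)
    (fun j => if t ≤ u j then u j else u ⟨n - 1, Nat.sub_lt hn one_pos⟩)

lemma truncPrefixSum_cons (θ m a : ℕ) (s : Multiset ℕ) :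
    truncPrefixSum θ m (a ::ₘ s) =
      (if a ≤ m then min a θ else 0) + truncPrefixSum θ m s := by
  simp only [truncPrefixSum, Multiset.filter_cons]
  split <;> simp

lemma bucketCount_cons {n : ℕ} (u : Fin n → ℕ) (a : ℕ) (s : Multiset ℕ) (j : Fin n) :
    bucketCount u (a ::ₘ s) j =
      (if lowerEndpoint u j < a ∧ a ≤ u j then 1 else 0) + bucketCount u s j := by
  simp only [bucketCount, Multiset.filter_cons]
  split <;> simp <;> omega

lemma exists_bucket {n : ℕ} (hn : 0 < n) (u : Fin n → ℕ) (hu : StrictMono u)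
    (t : ℕ) (ht1 : 1 ≤ t) (ht2 : t ≤ u ⟨n - 1, Nat.sub_lt hn one_pos⟩) :
    ∃ j : Fin n, (lowerEndpoint u j < t ∧ t ≤ u j) ∧ roundUp hn u t = u j ∧
      (∀ k : Fin n, t ≤ u k → j ≤ k) ∧
      (∀ k : Fin n, (lowerEndpoint u k < t ∧ t ≤ u k) → k = j) := by
  classical
  set top : Fin n := ⟨n - 1, Nat.sub_lt hn one_pos⟩ with htop
  set S : Finset (Fin n) := Finset.univ.filter (fun j => t ≤ u j) with hS
  have hSne : S.Nonempty := ⟨top, by simp [hS, ht2]⟩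
  set j : Fin n := S.min' hSne with hj
  have hjS : j ∈ S := Finset.min'_mem _ _
  have hjt : t ≤ u j := by simpa [hS] using hjS
  have hmin : ∀ k : Fin n, t ≤ u k → j ≤ k := fun k hk =>
    Finset.min'_le _ _ (by simp [hS, hk])
  have hlow : lowerEndpoint u j < t := by
    unfold lowerEndpoint
    split
    · omega
    · rename_i hne
      by_contra h
      push_neg at h
      have := hmin ⟨(j : ℕ) - 1, lt_of_le_of_lt (Nat.pred_le _) j.isLt⟩ h
      have : (j : ℕ) ≤ (j : ℕ) - 1 := this
      omega
  refine ⟨j, ⟨hlow, hjt⟩, ?_, hmin, ?_⟩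
  · apply le_antisymm
    · have := Finset.inf'_le (fun k => if t ≤ u k then u k else u top)
        (Finset.mem_univ j)
      simp only [hjt, if_true] at this
      exact this
    · apply Finset.le_inf'
      intro k _
      split
      · exact hu.le_iff_le.mpr (hmin k (by assumption))
      · exact hu.le_iff_le.mpr (hmin top ht2)
  · rintro k ⟨hk1, hk2⟩
    have hjk := hmin k hk2
    rcases eq_or_lt_of_le hjk with h | h
    · exact h.symm
    · exfalso
      have hkne : (k : ℕ) ≠ 0 := by
        have : (j : ℕ) < (k : ℕ) := h
        omega
      have hlek : lowerEndpoint u k = u ⟨(k : ℕ) - 1, lt_of_le_of_lt (Nat.pred_le _) k.isLt⟩ := by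
        simp [lowerEndpoint, hkne]
      have hjk1 : j ≤ (⟨(k : ℕ) - 1, lt_of_le_of_lt (Nat.pred_le _) k.isLt⟩ : Fin n) := by
        exact Fin.mk_le_mk.mpr (Nat.le_pred_of_lt (show (j : ℕ) < (k : ℕ) from h))
      have hle : u j ≤ lowerEndpoint u k := by
        rw [hlek]; exact hu.le_iff_le.mpr hjk1
      exact absurd hk1 (not_lt.mpr (le_trans hjt hle))

lemma middle_eq {n : ℕ} (hn : 0 < n) (u : Fin n → ℕ) (hu : StrictMono u)
    (D : Multiset ℕ)
    (hD : ∀ t ∈ D, 1 ≤ t ∧ t ≤ u ⟨n - 1, Nat.sub_lt hn one_pos⟩)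
    (θ : ℕ) (i : Fin n) :
    (∑ j : Fin n, if j ≤ i then min (u j) θ * bucketCount u D j else 0) =
      truncPrefixSum θ (u i) (D.map (roundUp hn u)) := by
  classical
  induction D using Multiset.induction_on with
  | empty => simp [bucketCount, truncPrefixSum]
  | cons a s ih =>
    have ha := hD a (Multiset.mem_cons_self a s)
    obtain ⟨j₀, hbkt, hre, hmin, huniq⟩ := exists_bucket hn u hu a ha.1 ha.2
    have ihs := ih (fun t ht => hD t (Multiset.mem_cons_of_mem ht))
    have hsplit : (∑ j : Fin n, if j ≤ i then min (u j) θ * bucketCount u (a ::ₘ s) j else 0)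
        = (∑ j : Fin n, if j ≤ i then
            min (u j) θ * (if lowerEndpoint u j < a ∧ a ≤ u j then 1 else 0) else 0)
          + (∑ j : Fin n, if j ≤ i then min (u j) θ * bucketCount u s j else 0) := by
      rw [← Finset.sum_add_distrib]
      refine Finset.sum_congr rfl fun j _ => ?_
      rw [bucketCount_cons, Nat.mul_add]
      split <;> simp
    rw [hsplit, ihs, Multiset.map_cons, truncPrefixSum_cons]
    congr 1
    rw [Finset.sum_eq_single j₀]
    · rw [if_pos hbkt, hre]
      by_cases h : a ≤ u i
      · rw [if_pos (hmin i h), if_pos (hu.le_iff_le.mpr (hmin i h))]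
        ring
      · have h1 : ¬ j₀ ≤ i := fun hc => h (le_trans hbkt.2 (hu.le_iff_le.mpr hc))
        have h2 : ¬ u j₀ ≤ u i := fun hc => h (le_trans hbkt.2 hc)
        rw [if_neg h1, if_neg h2]
    · intro k _ hk
      have : ¬ (lowerEndpoint u k < a ∧ a ≤ u k) := fun hc => hk (huniq k hc)
      rw [if_neg this]
      split <;> simp
    · intro h
      exact absurd (Finset.mem_univ j₀) h

lemma lower_le {n : ℕ} (hn : 0 < n) (u : Fin n → ℕ) (hu : StrictMono u)
    (D : Multiset ℕ)
    (hD : ∀ t ∈ D, 1 ≤ t ∧ t ≤ u ⟨n - 1, Nat.sub_lt hn one_pos⟩)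
    (θ : ℕ) (i : Fin n) :
    truncPrefixSum θ (u i) D ≤ truncPrefixSum θ (u i) (D.map (roundUp hn u)) := by
  induction D using Multiset.induction_on with
  | empty => simp
  | cons a s ih =>
    have ha := hD a (Multiset.mem_cons_self a s)
    obtain ⟨j₀, hbkt, hre, hmin, _⟩ := exists_bucket hn u hu a ha.1 ha.2
    have ihs := ih (fun t ht => hD t (Multiset.mem_cons_of_mem ht))
    rw [Multiset.map_cons, truncPrefixSum_cons, truncPrefixSum_cons]
    apply Nat.add_le_add _ ihs
    by_cases h : a ≤ u i
    · rw [if_pos h, hre, if_pos (hu.le_iff_le.mpr (hmin i h))]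
      exact min_le_min hbkt.2 le_rfl
    · rw [if_neg h]
      exact Nat.zero_le _

/-- The vectorized truncated answer `(WTx)_i = Σ_{j≤i} min(u_j,θ)·x_j` sandwiches
between the exact truncated prefix sum on `D` and on `D_max` (each element of `D`
rounded up to its bucket's upper endpoint). -/
theorem vectorized_trunc_bounds {n : ℕ} (hn : 0 < n) (u : Fin n → ℕ)
    (hu : StrictMono u) (D : Multiset ℕ)
    (hD : ∀ t ∈ D, 1 ≤ t ∧ t ≤ u ⟨n - 1, Nat.sub_lt hn one_pos⟩)
    (θ : ℕ) (i : Fin n) :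
    truncPrefixSum θ (u i) D ≤
        (∑ j : Fin n, if j ≤ i then min (u j) θ * bucketCount u D j else 0) ∧
    (∑ j : Fin n, if j ≤ i then min (u j) θ * bucketCount u D j else 0) ≤
        truncPrefixSum θ (u i) (D.map (roundUp hn u)) := by
  rw [middle_eq hn u hu D hD θ i]
  exact ⟨lower_le hn u hu D hD θ i, le_rfl⟩
end
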